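/- Let n ∈ ℕ be even and γ > 0 with γn ∈ ℕ. If S ∈ Σⁿ is an ε-synchronization string, then the string S' ∈ (Σ³)^{γn²} defined by S'[i] = (S[i mod n], S[(i + n/2) mod n], S[⌈i/(γn)⌉]) is an (ε + 6γ)-synchronization string of length γn². -/

import Mathlib

variable {α : Type*}

/-- Insertion-deletion edit distance. -/
def ED [DecidableEq α] : List α → List α → ℕ
  | [], ys => ys.length
  | _ :: xs, [] => xs.length + 1
  | x :: xs, y :: ys =>
    if x = y then ED xs ys
    else 1 + min (ED (x :: xs) ys) (ED xs (y :: ys))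
termination_by xs ys => xs.length + ys.length
decreasing_by all_goals (simp; try omega)

/-- Length of longest common subsequence. -/
def LCSlen [DecidableEq α] : List α → List α → ℕ
  | [], _ => 0
  | _ :: _, [] => 0
  | x :: xs, y :: ys =>
    if x = y then 1 + LCSlen xs ys
    else max (LCSlen (x :: xs) ys) (LCSlen xs (y :: ys))
termination_by xs ys => xs.length + ys.length
decreasing_by all_goals (simp; try omega)

/-- substring S[i, j) of an (infinite) string -/
def sub (S : ℕ → α) (i j : ℕ) : List α := (List.range' i (j - i)).map S

def IsSyncString [DecidableEq α] (ε : ℝ) (n : ℕ) (S : ℕ → α) : Prop :=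
  ∀ i j k : ℕ, i < j → j < k → k ≤ n →
    (1 - ε) * ((k : ℝ) - i) < ED (sub S i j) (sub S j k)

def ReachableR (c y : List α) (D G : ℝ) : Prop :=
  ∃ z : List α, z.Sublist c ∧ z.Sublist y ∧
    (c.length : ℝ) - z.length ≤ D ∧ (y.length : ℝ) - z.length ≤ G


theorem myED_eq [DecidableEq α] :
    ∀ x y : List α, ED x y + 2 * LCSlen x y = x.length + y.length
  | [], ys => by simp [ED, LCSlen]
  | x :: xs, [] => by simp [ED, LCSlen]
  | x :: xs, y :: ys => by
    have h1 := myED_eq (x :: xs) ys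
    have h2 := myED_eq xs (y :: ys)
    have h3 := myED_eq xs ys
    by_cases h : x = y
    · rw [ED, LCSlen, if_pos h, if_pos h]
      simp at h1 h2 h3 ⊢; omega
    · rw [ED, LCSlen, if_neg h, if_neg h]
      simp at h1 h2 h3 ⊢; omega
termination_by x y => x.length + y.length
decreasing_by all_goals (simp; try omega)

theorem myLCS_ge [DecidableEq α] :
    ∀ (x y z : List α), z.Sublist x → z.Sublist y → z.length ≤ LCSlen x y
  | _, _, [], _, _ => Nat.zero_le _
  | [], _, a :: z, hzx, _ => by simp at hzx
  | _ :: _, [], a :: z, _, hzy => by simp at hzy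
  | x :: xs, y :: ys, a :: z, hzx, hzy => by
    rw [LCSlen]
    by_cases h : x = y
    · rw [if_pos h]
      have hx : z.Sublist xs := by
        cases hzx with
        | cons _ h' => exact ((List.sublist_cons_self a z).trans h')
        | cons_cons _ h' => exact h'
      have hy : z.Sublist ys := by
        cases hzy with
        | cons _ h' => exact ((List.sublist_cons_self a z).trans h')
        | cons_cons _ h' => exact h'
      have := myLCS_ge xs ys z hx hy
      simp; omega
    · rw [if_neg h]
      cases hzx with
      | cons _ h' =>
        have := myLCS_ge xs (y :: ys) (a :: z) h' hzy
        omega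
      | cons_cons _ h' =>
        cases hzy with
        | cons _ h'' =>
          have := myLCS_ge (x :: xs) ys _ (h'.cons₂ x) h''
          omega
        | cons_cons _ h'' => exact absurd rfl h
termination_by x y z => x.length + y.length
decreasing_by all_goals (simp; try omega)

theorem myLCS_exists [DecidableEq α] :
    ∀ x y : List α, ∃ z : List α, z.Sublist x ∧ z.Sublist y ∧ z.length = LCSlen x y
  | [], ys => ⟨[], List.nil_sublist _, List.nil_sublist _, by simp [LCSlen]⟩
  | x :: xs, [] => ⟨[], List.nil_sublist _, List.nil_sublist _, by simp [LCSlen]⟩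
  | x :: xs, y :: ys => by
    by_cases h : x = y
    · obtain ⟨z, h1, h2, h3⟩ := myLCS_exists xs ys
      refine ⟨x :: z, List.Sublist.cons₂ x h1, ?_, ?_⟩
      · rw [h]; exact List.Sublist.cons₂ y h2
      · rw [LCSlen, if_pos h]; simp [h3]; omega
    · obtain ⟨z₁, h11, h12, h13⟩ := myLCS_exists (x :: xs) ys
      obtain ⟨z₂, h21, h22, h23⟩ := myLCS_exists xs (y :: ys)
      rw [LCSlen, if_neg h]
      rcases le_total (LCSlen (x :: xs) ys) (LCSlen xs (y :: ys)) with hle | hle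
      · exact ⟨z₂, h21.trans (List.sublist_cons_self x xs), h22, by omega⟩
      · exact ⟨z₁, h11, h12.trans (List.sublist_cons_self y ys), by omega⟩
termination_by x y => x.length + y.length
decreasing_by all_goals (simp; try omega)

theorem myLCS_le_left [DecidableEq α] (x y : List α) : LCSlen x y ≤ x.length := by
  obtain ⟨z, h1, h2, h3⟩ := myLCS_exists x y
  exact h3 ▸ h1.length_le

theorem myLCS_le_right [DecidableEq α] (x y : List α) : LCSlen x y ≤ y.length := by
  obtain ⟨z, h1, h2, h3⟩ := myLCS_exists x y
  exact h3 ▸ h2.length_le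

theorem myLCS_map_le {β : Type*} [DecidableEq α] [DecidableEq β] (f : α → β) (x y : List α) :
    LCSlen x y ≤ LCSlen (x.map f) (y.map f) := by
  obtain ⟨z, h1, h2, h3⟩ := myLCS_exists x y
  calc LCSlen x y = (z.map f).length := by simp [h3]
  _ ≤ _ := myLCS_ge _ _ _ (h1.map f) (h2.map f)

theorem myED_map_le {β : Type*} [DecidableEq α] [DecidableEq β] (f : α → β) (x y : List α) :
    ED (x.map f) (y.map f) ≤ ED x y := by
  have h1 := myED_eq x y
  have h2 := myED_eq (x.map f) (y.map f)
  have h3 := myLCS_map_le f x y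
  simp at h2
  omega

theorem myLCS_append_le [DecidableEq α] (x w y : List α) :
    LCSlen (x ++ w) y ≤ LCSlen x y + w.length := by
  obtain ⟨z, h1, h2, h3⟩ := myLCS_exists (x ++ w) y
  obtain ⟨z₁, z₂, rfl, hz1, hz2⟩ := List.sublist_append_iff.mp h1
  have : z₁.length ≤ LCSlen x y :=
    myLCS_ge _ _ _ hz1 ((List.sublist_append_left z₁ z₂).trans h2)
  have := hz2.length_le
  simp at h3
  omega


-- strict sorted list in a window is a sublist of range'
theorem my_ssr : ∀ (K s : ℕ) (l : List ℕ), List.Chain' (· < ·) l →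
    (∀ x ∈ l, s ≤ x ∧ x < s + K) → l.Sublist (List.range' s K)
  | 0, s, l, _, hmem => by
    cases l with
    | nil => simp
    | cons a t => exact absurd (hmem a (by simp)) (by omega)
  | K + 1, s, l, hch, hmem => by
    rw [List.range'_succ]
    cases l with
    | nil => exact List.nil_sublist _
    | cons a t =>
      have hpw : List.Pairwise (· < ·) (a :: t) := List.isChain_iff_pairwise.mp hch
      rcases eq_or_lt_of_le (hmem a (by simp)).1 with h | h
      · subst h
        refine List.Sublist.cons₂ _ (my_ssr K (s + 1) t (hch.tail) ?_)
        intro x hx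
        have h1 := (hmem x (by simp [hx])).2
        have h2 := List.rel_of_pairwise_cons hpw hx
        omega
      · refine List.Sublist.cons _ (my_ssr K (s + 1) (a :: t) hch ?_)
        intro x hx
        have h1 := hmem x hx
        rcases List.mem_cons.mp hx with h' | h'
        · omega
        · have h2 := List.rel_of_pairwise_cons hpw h'
          omega

-- zip of two sorted lists is a chain
theorem my_chain'_zip {r₁ r₂ : ℕ → ℕ → Prop} (P Q : List ℕ)
    (h1 : List.Chain' r₁ P) (h2 : List.Chain' r₂ Q) :
    List.Chain' (fun u v : ℕ × ℕ => r₁ u.1 v.1 ∧ r₂ u.2 v.2) (P.zip Q) := by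
  unfold List.Chain' at h1 h2 ⊢
  rw [List.isChain_iff_getElem] at h1 h2 ⊢
  intro i hi
  simp only [List.length_zip] at hi
  simp only [List.get_eq_getElem, List.getElem_zip]
  constructor
  · exact h1 i (by omega)
  · exact h2 i (by omega)

-- counting elements of a block among a sublist of a range
theorem my_count_le (g a p L : ℕ) (hg : 0 < g) (I : List ℕ) (hI : I.Sublist (List.range' p L)) :
    (I.map (· / g)).count a ≤ g := by
  classical
  rw [List.count_eq_countP, List.countP_map]
  rw [List.countP_eq_length_filter]
  set F := I.filter (fun t => (· == a) ((· / g) t)) with hF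
  have hFsub : F.Sublist I := List.filter_sublist
  have hch : List.Chain' (· < ·) F :=
    List.isChain_iff_pairwise.mpr
      ((List.pairwise_lt_range').sublist (hFsub.trans hI))
  have hmem : ∀ x ∈ F, a * g ≤ x ∧ x < a * g + g := by
    intro x hx
    have := List.of_mem_filter hx
    simp only [beq_iff_eq] at this
    constructor
    · calc a * g = x / g * g := by rw [this]
      _ ≤ x := Nat.div_mul_le_self x g
    · have h2 : x < (x / g + 1) * g := by
        have := Nat.div_add_mod x g
        have := Nat.mod_lt x hg
        nlinarith [Nat.div_mul_le_self x g]
      calc x < (x / g + 1) * g := h2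
      _ = x / g * g + g := by ring
      _ = a * g + g := by rw [this]
  have := (my_ssr g (a * g) F hch hmem).length_le
  simp only [List.length_range'] at this
  exact this

-- congruence for mapped ranges
theorem my_map_range'_congr {α : Type*} : ∀ (m a b : ℕ) (f h : ℕ → α),
    (∀ t, t < m → f (a + t) = h (b + t)) →
    (List.range' a m).map f = (List.range' b m).map h
  | 0, a, b, f, h, _ => by simp
  | m + 1, a, b, f, h, hc => by
    rw [List.range'_succ, List.range'_succ]
    simp only [List.map_cons]
    congr 1
    · simpa using hc 0 (by omega)
    · exact my_map_range'_congr m (a + 1) (b + 1) f h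
        (fun t ht => by
          have := hc (t + 1) (by omega)
          simpa [Nat.add_assoc, Nat.add_comm 1 t] using this)


private def rle (u v : ℕ × ℕ) : Prop := u.1 ≤ v.1 ∧ u.2 ≤ v.2
private def rlt (u v : ℕ × ℕ) : Prop := u.1 < v.1 ∧ u.2 < v.2

private instance : IsTrans (ℕ × ℕ) rle := ⟨fun _ _ _ h1 h2 => ⟨h1.1.trans h2.1, h1.2.trans h2.2⟩⟩

private def corP (h : ℕ × ℕ) : ℕ × ℕ → Bool := fun v => decide (v.1 = h.1 ∨ v.2 = h.2)

theorem my_core (g : ℕ) : ∀ (N : ℕ) (R : List (ℕ × ℕ)), R.length ≤ N →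
    List.Chain' rle R →
    (∀ a, (R.map Prod.fst).count a ≤ g) → (∀ b, (R.map Prod.snd).count b ≤ g) →
    ∃ R' : List (ℕ × ℕ), R'.Sublist R ∧ List.Chain' rlt R' ∧ R.length ≤ g * R'.length := by
  intro N
  induction N with
  | zero =>
    intro R hlen _ _ _
    obtain rfl : R = [] := List.length_eq_zero_iff.mp (Nat.le_zero.mp hlen)
    exact ⟨[], List.nil_sublist _, List.isChain_nil, by simp⟩
  | succ N IH =>
    intro R hlen hch hcf hcs
    cases R with
    | nil => exact ⟨[], List.nil_sublist _, List.isChain_nil, by simp⟩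
    | cons hd tl =>
      have hpw : List.Pairwise rle (hd :: tl) := List.isChain_iff_pairwise.mp hch
      have hsplit : hd :: tl = (hd :: tl.takeWhile (corP hd)) ++ tl.dropWhile (corP hd) := by
        rw [List.cons_append, List.takeWhile_append_dropWhile]
      have hS0sub : (hd :: tl.takeWhile (corP hd)).Sublist (hd :: tl) :=
        (List.takeWhile_sublist _).cons₂ hd
      have hR2sub : (tl.dropWhile (corP hd)).Sublist (hd :: tl) :=
        (List.dropWhile_sublist _).trans (List.sublist_cons_self hd tl)
      have hS0P : ∀ v ∈ hd :: tl.takeWhile (corP hd), v.1 = hd.1 ∨ v.2 = hd.2 := by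
        intro v hv
        rcases List.mem_cons.mp hv with h | h
        · left; rw [h]
        · have := List.mem_takeWhile_imp h
          simpa [corP] using this
      have hkey : (∀ v ∈ hd :: tl.takeWhile (corP hd), v.1 = hd.1) ∨
          (∀ v ∈ hd :: tl.takeWhile (corP hd), v.2 = hd.2) := by
        by_contra hcon
        push_neg at hcon
        obtain ⟨⟨u, hu, hu1⟩, ⟨w, hw, hw2⟩⟩ := hcon
        have hu2 : u.2 = hd.2 := (hS0P u hu).resolve_left hu1
        have hw1 : w.1 = hd.1 := (hS0P w hw).resolve_right hw2
        have huhd : rle hd u := by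
          rcases List.mem_cons.mp (hS0sub.mem hu) with h | h
          · exact absurd (h ▸ rfl) hu1
          · exact List.rel_of_pairwise_cons hpw h
        have hwhd : rle hd w := by
          rcases List.mem_cons.mp (hS0sub.mem hw) with h | h
          · exact absurd (h ▸ rfl) hw2
          · exact List.rel_of_pairwise_cons hpw h
        have hne : u ≠ w := by
          intro h; rw [h] at hu2; exact hw2 hu2
        have hsym : Symmetric (fun a b => rle a b ∨ rle b a) := fun a b h => h.symm
        have hpw' : List.Pairwise (fun a b => rle a b ∨ rle b a) (hd :: tl.takeWhile (corP hd)) :=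
          (hpw.sublist hS0sub).imp (fun h => Or.inl h)
        rcases @List.Pairwise.forall _ _ _ ⟨fun a b h => hsym h⟩ hpw' _ hu _ hw hne with h | h
        · have h1 := h.1; have h2 := huhd.1; rw [hw1] at h1
          exact hu1 (le_antisymm h1 h2)
        · have h1 := h.2; have h2 := hwhd.2; rw [hu2] at h1
          exact hw2 (le_antisymm h1 h2)
      have hS0len : (hd :: tl.takeWhile (corP hd)).length ≤ g := by
        rcases hkey with hk | hk
        · have he : ∀ b ∈ (hd :: tl.takeWhile (corP hd)).map Prod.fst, b = hd.1 := by
            intro b hb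
            obtain ⟨v, hv, rfl⟩ := List.mem_map.mp hb
            exact hk v hv
          have he2 := List.eq_replicate_of_mem he
          have hcount : ((hd :: tl.takeWhile (corP hd)).map Prod.fst).count hd.1
              = (hd :: tl.takeWhile (corP hd)).length := by
            rw [he2]; simp
          have h3 := (hS0sub.map Prod.fst).count_le hd.1
          have h4 := hcf hd.1
          omega
        · have he : ∀ b ∈ (hd :: tl.takeWhile (corP hd)).map Prod.snd, b = hd.2 := by
            intro b hb
            obtain ⟨v, hv, rfl⟩ := List.mem_map.mp hb
            exact hk v hv
          have he2 := List.eq_replicate_of_mem he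
          have hcount : ((hd :: tl.takeWhile (corP hd)).map Prod.snd).count hd.2
              = (hd :: tl.takeWhile (corP hd)).length := by
            rw [he2]; simp
          have h3 := (hS0sub.map Prod.snd).count_le hd.2
          have h4 := hcs hd.2
          omega
      rcases hD : tl.dropWhile (corP hd) with _ | ⟨q, tl2⟩
      · -- no jump: whole list is one fiber
        refine ⟨[hd], by simp, List.isChain_singleton _, ?_⟩
        have h1 : (hd :: tl).length = (hd :: tl.takeWhile (corP hd)).length := by
          conv_lhs => rw [hsplit]
          rw [hD]; simp
        simp only [List.length_singleton, mul_one]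
        omega
      · -- q fails corP hd and hd < q in both coordinates
        have hq : ¬ (q.1 = hd.1 ∨ q.2 = hd.2) := by
          have hne : tl.dropWhile (corP hd) ≠ [] := by rw [hD]; simp
          have := List.head_dropWhile_not (corP hd) hne
          simp only [hD, List.head_cons] at this
          simpa [corP] using this
        push_neg at hq
        have hqmem : q ∈ hd :: tl := by
          refine hR2sub.mem ?_
          rw [hD]; simp
        have hhdq : rle hd q := by
          rcases List.mem_cons.mp hqmem with h | h
          · exact absurd (h ▸ rfl) hq.1
          · exact List.rel_of_pairwise_cons hpw h
        have hhdq' : rlt hd q :=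
          ⟨lt_of_le_of_ne hhdq.1 (Ne.symm hq.1), lt_of_le_of_ne hhdq.2 (Ne.symm hq.2)⟩
        have hlentotal : (hd :: tl).length
            = (hd :: tl.takeWhile (corP hd)).length + (q :: tl2).length := by
          conv_lhs => rw [hsplit]
          rw [hD, List.length_append]
        have hlen2 : (q :: tl2).length ≤ N := by
          simp only [List.length_cons] at hlen hlentotal ⊢
          omega
        have hch2 : List.Chain' rle (q :: tl2) := by
          have h0 : List.Chain' rle ((hd :: tl.takeWhile (corP hd)) ++ tl.dropWhile (corP hd)) := by
            rw [← hsplit]; exact hch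
          rw [hD] at h0
          exact (List.isChain_append.mp h0).2.1
        have hR2sub' : (q :: tl2).Sublist (hd :: tl) := by rw [← hD]; exact hR2sub
        obtain ⟨R2', hsub2, hch2', hlen2'⟩ := IH (q :: tl2) hlen2 hch2
          (fun a => le_trans ((hR2sub'.map Prod.fst).count_le a) (hcf a))
          (fun b => le_trans ((hR2sub'.map Prod.snd).count_le b) (hcs b))
        have hR2subtl : (q :: tl2).Sublist tl := by
          rw [← hD]; exact List.dropWhile_sublist _
        refine ⟨hd :: R2', (hsub2.trans hR2subtl).cons₂ hd, ?_, ?_⟩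
        · unfold List.Chain'
          rw [List.isChain_cons]
          refine ⟨?_, hch2'⟩
          intro h2 hh2
          have hh2mem : h2 ∈ q :: tl2 := hsub2.mem (List.mem_of_mem_head? hh2)
          have hle : rle q h2 ∨ q = h2 := by
            rcases List.mem_cons.mp hh2mem with h | h
            · exact Or.inr h.symm
            · exact Or.inl (List.rel_of_pairwise_cons (List.isChain_iff_pairwise.mp hch2) h)
          rcases hle with h | h
          · exact ⟨lt_of_lt_of_le hhdq'.1 h.1, lt_of_lt_of_le hhdq'.2 h.2⟩
          · exact h ▸ hhdq'
        · have hmul : g * (R2'.length + 1) = g * R2'.length + g := by ring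
          simp only [List.length_cons] at *
          omega


theorem my_blow {σ : Type*} [DecidableEq σ] (S : ℕ → σ) (g : ℕ) (hg : 0 < g)
    (p q r s m : ℕ) (hpq : p ≤ q) (hq : q ≤ g * m) (hr : g * m ≤ r) (hrs : r ≤ s - 1) :
    LCSlen (sub (fun t => S (t / g)) p q) (sub (fun t => S (t / g)) r s)
      ≤ g * LCSlen (sub S (p / g) m) (sub S m ((s - 1) / g + 1)) := by
  classical
  set T : ℕ → σ := fun t => S (t / g) with hT
  obtain ⟨z, hzx, hzy, hzlen⟩ := myLCS_exists (sub T p q) (sub T r s)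
  rw [show sub T p q = (List.range' p (q - p)).map T from rfl] at hzx
  rw [show sub T r s = (List.range' r (s - r)).map T from rfl] at hzy
  obtain ⟨Ix, hIx, rfl⟩ := List.sublist_map_iff.mp hzx
  obtain ⟨Iy, hIy, hxy⟩ := List.sublist_map_iff.mp hzy
  set P := Ix.map (· / g) with hP
  set Q := Iy.map (· / g) with hQ
  have hlenPQ : P.length = Q.length := by
    have := congrArg List.length hxy
    simp only [List.length_map] at this
    simp only [hP, hQ, List.length_map]
    exact this
  have hSP : (Ix.map T) = P.map S := by rw [hP, List.map_map]; rfl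
  have hSQ : (Iy.map T) = Q.map S := by rw [hQ, List.map_map]; rfl
  -- sortedness
  have hpwIx : List.Pairwise (· < ·) Ix := (List.pairwise_lt_range').sublist hIx
  have hpwIy : List.Pairwise (· < ·) Iy := (List.pairwise_lt_range').sublist hIy
  have hchP : List.Chain' (· ≤ ·) P := by
    refine List.Pairwise.isChain ?_
    rw [hP, List.pairwise_map]
    exact hpwIx.imp (fun h => Nat.div_le_div_right (le_of_lt h))
  have hchQ : List.Chain' (· ≤ ·) Q := by
    refine List.Pairwise.isChain ?_
    rw [hQ, List.pairwise_map]
    exact hpwIy.imp (fun h => Nat.div_le_div_right (le_of_lt h))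
  set R := P.zip Q with hR
  have hmapfst : R.map Prod.fst = P := List.map_fst_zip (le_of_eq hlenPQ)
  have hmapsnd : R.map Prod.snd = Q := List.map_snd_zip (ge_of_eq hlenPQ)
  have hchR : List.Chain' rle R := (my_chain'_zip P Q hchP hchQ).imp (fun _ _ h => ⟨h.1, h.2⟩)
  have hcf : ∀ a, (R.map Prod.fst).count a ≤ g := by
    intro a; rw [hmapfst, hP]; exact my_count_le g a p (q - p) hg Ix hIx
  have hcs : ∀ b, (R.map Prod.snd).count b ≤ g := by
    intro b; rw [hmapsnd, hQ]; exact my_count_le g b r (s - r) hg Iy hIy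
  have hpair : ∀ v ∈ R, S v.1 = S v.2 := by
    intro v hv
    obtain ⟨idx, hidx, hveq⟩ := List.mem_iff_getElem.mp hv
    have hidx' : idx < P.length := by
      rw [hR] at hidx; simp [List.length_zip] at hidx; omega
    have hidx'' : idx < Q.length := by omega
    have hPQS : P.map S = Q.map S := by rw [← hSP, ← hSQ]; exact hxy
    have hz := List.getElem_of_eq hPQS (show idx < (P.map S).length by simpa using hidx')
    simp only [List.getElem_map] at hz
    have hvz : v = (P[idx]'hidx', Q[idx]'hidx'') := by
      rw [← hveq]
      exact List.getElem_zip (i := idx)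
    rw [hvz]
    exact hz
  obtain ⟨R', hsubR, hchR', hlenR⟩ := my_core g R.length R le_rfl hchR hcf hcs
  -- membership bounds
  have hmemP : ∀ e ∈ P, p / g ≤ e ∧ e < m := by
    intro e he
    rw [hP] at he
    obtain ⟨t, ht, rfl⟩ := List.mem_map.mp he
    have htr := hIx.mem ht
    rw [List.mem_range'_1] at htr
    constructor
    · exact Nat.div_le_div_right htr.1
    · rw [Nat.div_lt_iff_lt_mul hg]
      calc t < p + (q - p) := htr.2
      _ ≤ m * g := by rw [Nat.mul_comm]; omega
  have hmemQ : ∀ e ∈ Q, m ≤ e ∧ e < (s - 1) / g + 1 := by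
    intro e he
    rw [hQ] at he
    obtain ⟨t, ht, rfl⟩ := List.mem_map.mp he
    have htr := hIy.mem ht
    rw [List.mem_range'_1] at htr
    constructor
    · calc m = g * m / g := by rw [Nat.mul_div_cancel_left _ hg]
      _ ≤ t / g := Nat.div_le_div_right (le_trans hr htr.1)
    · have : t ≤ s - 1 := by omega
      have := Nat.div_le_div_right (c := g) this
      omega
  -- strict chains on coordinates
  have hchfst : List.Chain' (· < ·) (R'.map Prod.fst) := by
    unfold List.Chain'
    rw [List.isChain_map]
    exact hchR'.imp (fun _ _ h => h.1)
  have hchsnd : List.Chain' (· < ·) (R'.map Prod.snd) := by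
    unfold List.Chain'
    rw [List.isChain_map]
    exact hchR'.imp (fun _ _ h => h.2)
  have hsubfst : (R'.map Prod.fst).Sublist P := hmapfst ▸ (hsubR.map Prod.fst)
  have hsubsnd : (R'.map Prod.snd).Sublist Q := hmapsnd ▸ (hsubR.map Prod.snd)
  have hpg : p / g ≤ m := by
    have hpgm : p ≤ g * m := le_trans hpq hq
    calc p / g ≤ g * m / g := Nat.div_le_div_right hpgm
    _ = m := Nat.mul_div_cancel_left _ hg
  have hmk : m ≤ (s - 1) / g + 1 := by
    have h1 : g * m ≤ s - 1 := le_trans hr hrs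
    have : m ≤ (s - 1) / g := by
      calc m = g * m / g := by rw [Nat.mul_div_cancel_left _ hg]
      _ ≤ (s - 1) / g := Nat.div_le_div_right h1
    omega
  have hw1 : (R'.map Prod.fst).Sublist (List.range' (p / g) (m - p / g)) := by
    refine my_ssr _ _ _ hchfst ?_
    intro x hx
    have := hmemP x (hsubfst.mem hx)
    omega
  have hw2 : (R'.map Prod.snd).Sublist (List.range' m ((s - 1) / g + 1 - m)) := by
    refine my_ssr _ _ _ hchsnd ?_
    intro x hx
    have := hmemQ x (hsubsnd.mem hx)
    omega
  have hzx' : (R'.map (fun v => S v.1)).Sublist (sub S (p / g) m) := by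
    have : R'.map (fun v => S v.1) = (R'.map Prod.fst).map S := by rw [List.map_map]; rfl
    rw [this]
    exact hw1.map S
  have hzy' : (R'.map (fun v => S v.1)).Sublist (sub S m ((s - 1) / g + 1)) := by
    have heq : R'.map (fun v => S v.1) = (R'.map Prod.snd).map S := by
      rw [List.map_map]
      refine List.map_congr_left ?_
      intro v hv
      exact hpair v (hsubR.mem hv)
    rw [heq]
    exact hw2.map S
  have hfin : R'.length ≤ LCSlen (sub S (p / g) m) (sub S m ((s - 1) / g + 1)) := by
    have := myLCS_ge _ _ _ hzx' hzy'
    simpa using this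
  -- lengths
  have hzlen' : (Ix.map T).length = R.length := by
    rw [hR, List.length_zip, ← hlenPQ]
    simp [hP]
  calc LCSlen (sub T p q) (sub T r s) = (Ix.map T).length := hzlen.symm
  _ = R.length := hzlen'
  _ ≤ g * R'.length := hlenR
  _ ≤ g * LCSlen (sub S (p / g) m) (sub S m ((s - 1) / g + 1)) := Nat.mul_le_mul_left g hfin

theorem my_sub_length {β : Type*} (f : ℕ → β) (a b : ℕ) : (sub f a b).length = b - a := by
  simp [sub]

theorem my_sub_append {β : Type*} (f : ℕ → β) (a b c : ℕ) (h1 : a ≤ b) (h2 : b ≤ c) :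
    sub f a c = sub f a b ++ sub f b c := by
  unfold sub
  rw [← List.map_append]
  congr 1
  have := @List.range'_append a (b - a) (c - b) 1
  simp only [one_mul] at this
  rw [show a + (b - a) = b by omega] at this
  rw [show b - a + (c - b) = c - a by omega] at this
  exact this.symm

theorem my_LCS_comm {β : Type*} [DecidableEq β] (x y : List β) : LCSlen x y = LCSlen y x := by
  have h1 : ∀ u v : List β, LCSlen u v ≤ LCSlen v u := by
    intro u v
    obtain ⟨z, ha, hb, hc⟩ := myLCS_exists u v
    rw [← hc]
    exact myLCS_ge _ _ _ hb ha
  exact le_antisymm (h1 x y) (h1 y x)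

theorem my_LCS_prepend_le {β : Type*} [DecidableEq β] (x w y : List β) :
    LCSlen x (w ++ y) ≤ LCSlen x y + w.length := by
  rw [my_LCS_comm, my_LCS_comm x y]
  obtain ⟨z, h1, h2, h3⟩ := myLCS_exists (w ++ y) x
  obtain ⟨z₁, z₂, hz, hz1, hz2⟩ := List.sublist_append_iff.mp h1
  subst hz
  have hb : z₂.length ≤ LCSlen y x :=
    myLCS_ge _ _ _ hz2 ((List.sublist_append_right z₁ z₂).trans h2)
  have := hz1.length_le
  simp at h3
  omega

set_option maxHeartbeats 1000000 in
theorem stmt8 {σ : Type*} [DecidableEq σ] (n g : ℕ) (γ ε : ℝ)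
    (hn : Even n) (hn0 : 0 < n) (hγ : 0 < γ) (hg : (g : ℝ) = γ * n)
    (S : ℕ → σ) (hS : IsSyncString ε n S) :
    IsSyncString (ε + 6 * γ) (g * n)
      (fun i => (S (i % n), S ((i + n / 2) % n), S (i / g))) := by
  classical
  intro i j k hij hjk hkn
  -- basic facts
  have hnR : (0:ℝ) < n := by exact_mod_cast hn0
  have hg0 : 0 < g := by
    rcases Nat.eq_zero_or_pos g with h | h
    · exfalso; rw [h] at hg; simp at hg; nlinarith
    · exact h
  have hgR : (0:ℝ) < g := by exact_mod_cast hg0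
  have h2n : 2 ≤ n := by obtain ⟨m, hm⟩ := hn; omega
  have hn2 : n = 2 * (n / 2) := by obtain ⟨m, hm⟩ := hn; omega
  have hε0 : 0 < ε := by
    have hh := hS 0 1 2 (by omega) (by omega) h2n
    have hle : ED (sub S 0 1) (sub S 1 2) ≤ 2 := by
      have h := myED_eq (sub S 0 1) (sub S 1 2)
      have l1 : (sub S 0 1).length = 1 := by simp [sub]
      have l2 : (sub S 1 2).length = 1 := by simp [sub]
      omega
    have hle' : ((ED (sub S 0 1) (sub S 1 2) : ℕ) : ℝ) ≤ 2 := by exact_mod_cast hle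
    push_cast at hh
    linarith
  have hkiR : (0:ℝ) < (k:ℝ) - i := by
    have : (i:ℝ) < k := by exact_mod_cast (lt_trans hij hjk)
    linarith
  -- projections
  have hproj : ∀ (T : ℕ → σ) (f : σ × σ × σ → σ),
      (∀ p, f ((S (p % n), S ((p + n / 2) % n), S (p / g))) = T p) →
      ((ED (sub T i j) (sub T j k) : ℕ) : ℝ) ≤
        ((ED (sub (fun q => (S (q % n), S ((q + n / 2) % n), S (q / g))) i j)
          (sub (fun q => (S (q % n), S ((q + n / 2) % n), S (q / g))) j k) : ℕ) : ℝ) := by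
    intro T f hf
    have h1 : (sub (fun q => (S (q % n), S ((q + n / 2) % n), S (q / g))) i j).map f
        = sub T i j := by
      simp only [sub, List.map_map]
      exact List.map_congr_left (fun x _ => hf x)
    have h2 : (sub (fun q => (S (q % n), S ((q + n / 2) % n), S (q / g))) j k).map f
        = sub T j k := by
      simp only [sub, List.map_map]
      exact List.map_congr_left (fun x _ => hf x)
    have := myED_map_le f
      (sub (fun q => (S (q % n), S ((q + n / 2) % n), S (q / g))) i j)
      (sub (fun q => (S (q % n), S ((q + n / 2) % n), S (q / g))) j k)
    rw [h1, h2] at this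
    exact_mod_cast this
  by_cases htriv : 1 < ε + 6 * γ
  · have h0 : (0:ℝ) ≤ ((ED (sub (fun q => (S (q % n), S ((q + n / 2) % n), S (q / g))) i j)
      (sub (fun q => (S (q % n), S ((q + n / 2) % n), S (q / g))) j k) : ℕ) : ℝ) :=
      Nat.cast_nonneg _
    nlinarith [mul_pos (show (0:ℝ) < ε + 6 * γ - 1 by linarith) hkiR]
  push_neg at htriv
  have hε1 : ε ≤ 1 := by nlinarith
  by_cases hshort : k - i ≤ n / 2
  · -- SHORT CASE
    have hrn : i % n < n := Nat.mod_lt i (by omega)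
    by_cases hwrap : i % n + (k - i) ≤ n
    · -- no wrap: first coordinate
      have hmod : ∀ t, t < k - i → (i + t) % n = i % n + t := by
        intro t ht
        have h2 : i + t = i % n + t + n * (i / n) := by
          conv_lhs => rw [← Nat.div_add_mod i n]
          ring
        rw [h2, Nat.add_mul_mod_self_left]
        exact Nat.mod_eq_of_lt (by omega)
      have e1 : sub (fun p => S (p % n)) i j = sub S (i % n) (i % n + (j - i)) := by
        unfold sub
        rw [show i % n + (j - i) - i % n = j - i by omega]
        exact my_map_range'_congr (j - i) i (i % n) _ S (fun t ht => by
          show S ((i + t) % n) = S (i % n + t)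
          rw [hmod t (by omega)])
      have e2 : sub (fun p => S (p % n)) j k
          = sub S (i % n + (j - i)) (i % n + (k - i)) := by
        unfold sub
        rw [show i % n + (k - i) - (i % n + (j - i)) = k - j by omega]
        exact my_map_range'_congr (k - j) j (i % n + (j - i)) _ S (fun t ht => by
          show S ((j + t) % n) = S (i % n + (j - i) + t)
          rw [show j + t = i + (j - i + t) by omega, hmod (j - i + t) (by omega),
            show i % n + (j - i + t) = i % n + (j - i) + t by omega])
      have hSS := hS (i % n) (i % n + (j - i)) (i % n + (k - i)) (by omega) (by omega) (by omega)
      rw [← e1, ← e2] at hSS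
      have hp := hproj (fun p => S (p % n)) (fun v => v.1) (fun p => rfl)
      have hc : ((i % n + (k - i) : ℕ) : ℝ) - ((i % n : ℕ) : ℝ) = (k : ℝ) - i := by
        push_cast [Nat.cast_sub (le_of_lt (lt_trans hij hjk))]
        ring
      rw [hc] at hSS
      linarith [mul_pos hγ hkiR]
    · -- wrap: second (shifted) coordinate
      push_neg at hwrap
      have hmod : ∀ t, t < k - i → (i + t + n / 2) % n = (i % n + n / 2 - n) + t := by
        intro t ht
        have h2 : i + t + n / 2 = i % n + t + n / 2 + n * (i / n) := by
          conv_lhs => rw [← Nat.div_add_mod i n]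
          ring
        rw [h2, Nat.add_mul_mod_self_left]
        rw [Nat.mod_eq_sub_mod (by omega)]
        rw [show i % n + t + n / 2 - n = (i % n + n / 2 - n) + t by omega]
        exact Nat.mod_eq_of_lt (by omega)
      have e1 : sub (fun p => S ((p + n / 2) % n)) i j
          = sub S (i % n + n / 2 - n) ((i % n + n / 2 - n) + (j - i)) := by
        unfold sub
        rw [show (i % n + n / 2 - n) + (j - i) - (i % n + n / 2 - n) = j - i by omega]
        exact my_map_range'_congr (j - i) i (i % n + n / 2 - n) _ S (fun t ht => by
          show S ((i + t + n / 2) % n) = S (i % n + n / 2 - n + t)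
          rw [hmod t (by omega)])
      have e2 : sub (fun p => S ((p + n / 2) % n)) j k
          = sub S ((i % n + n / 2 - n) + (j - i)) ((i % n + n / 2 - n) + (k - i)) := by
        unfold sub
        rw [show (i % n + n / 2 - n) + (k - i) - ((i % n + n / 2 - n) + (j - i)) = k - j by omega]
        exact my_map_range'_congr (k - j) j ((i % n + n / 2 - n) + (j - i)) _ S (fun t ht => by
          show S ((j + t + n / 2) % n) = S ((i % n + n / 2 - n) + (j - i) + t)
          rw [show j + t + n / 2 = i + (j - i + t) + n / 2 by omega, hmod (j - i + t) (by omega),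
            show (i % n + n / 2 - n) + (j - i + t) = (i % n + n / 2 - n) + (j - i) + t by omega])
      have hSS := hS (i % n + n / 2 - n) ((i % n + n / 2 - n) + (j - i))
        ((i % n + n / 2 - n) + (k - i)) (by omega) (by omega) (by omega)
      rw [← e1, ← e2] at hSS
      have hp := hproj (fun p => S ((p + n / 2) % n)) (fun v => v.2.1) (fun p => rfl)
      have hc : (((i % n + n / 2 - n) + (k - i) : ℕ) : ℝ) - ((i % n + n / 2 - n : ℕ) : ℝ)
          = (k : ℝ) - i := by
        push_cast [Nat.cast_sub (le_of_lt (lt_trans hij hjk))]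
        ring
      rw [hc] at hSS
      linarith [mul_pos hγ hkiR]
  · -- LONG CASE
    push_neg at hshort
    have hLcast : ((k - i : ℕ) : ℝ) = (k:ℝ) - i := by
      push_cast [Nat.cast_sub (le_of_lt (lt_trans hij hjk))]; ring
    have hn2R : ((n / 2 : ℕ) : ℝ) = (n:ℝ) / 2 := by
      have h1 : (n:ℝ) = 2 * ((n / 2 : ℕ) : ℝ) := by exact_mod_cast congrArg (Nat.cast (R := ℝ)) hn2
      linarith
    have hbudget : 3 * (g:ℝ) + 6 * γ ≤ 6 * γ * ((k:ℝ) - i) := by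
      have h1 : ((n / 2 : ℕ) : ℝ) + 1 ≤ (k:ℝ) - i := by
        rw [← hLcast]
        exact_mod_cast hshort
      rw [hn2R] at h1
      rw [hg]
      have hmul : 0 ≤ 6 * γ * (((k:ℝ) - i) - ((n:ℝ)/2 + 1)) :=
        mul_nonneg (by linarith) (by linarith)
      nlinarith
    have hdm_i := Nat.div_add_mod i g
    have hdm_j := Nat.div_add_mod j g
    have hdm_k := Nat.div_add_mod (k - 1) g
    have hmod_i := Nat.mod_lt i hg0
    have hmod_j := Nat.mod_lt j hg0
    have hmod_k := Nat.mod_lt (k - 1) hg0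
    have hg1R : (1:ℝ) ≤ (g:ℝ) := by exact_mod_cast hg0
    have hkBn : (k - 1) / g + 1 ≤ n := by
      have h1 : (k - 1) / g < n := by
        rw [Nat.div_lt_iff_lt_mul hg0]
        have h2 : g * n = n * g := by ring
        omega
      omega
    -- key bound on twice the LCS of the third coordinate
    have key : 2 * ((LCSlen (sub (fun p => S (p / g)) i j) (sub (fun p => S (p / g)) j k) : ℕ) : ℝ)
        < (ε + 6 * γ) * ((k:ℝ) - i) := by
      by_cases hA : i / g = j / g
      · -- i, j in the same block
        have hgeq : g * (i / g) = g * (j / g) := by rw [hA]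
        have hji : j - i ≤ g - 1 := by omega
        have h1 : LCSlen (sub (fun p => S (p / g)) i j) (sub (fun p => S (p / g)) j k) ≤ g - 1 := by
          have := myLCS_le_left (sub (fun p => S (p / g)) i j) (sub (fun p => S (p / g)) j k)
          rw [my_sub_length] at this
          omega
        have h2 : ((LCSlen (sub (fun p => S (p / g)) i j) (sub (fun p => S (p / g)) j k) : ℕ) : ℝ)
            ≤ (g:ℝ) - 1 := by
          have h3 := (Nat.cast_le (α := ℝ)).mpr h1
          have hgc : ((g - 1 : ℕ) : ℝ) = (g:ℝ) - 1 := by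
            push_cast [Nat.cast_sub (by omega : 1 ≤ g)]; ring
          rw [hgc] at h3
          exact h3
        linarith [mul_pos hε0 hkiR]
      · by_cases hB : (k - 1) / g + 1 ≤ j / g + 1
        · -- j, k-1 in the same block
          have h4 : (k - 1) / g ≤ j / g := by omega
          have h5 : g * ((k - 1) / g) ≤ g * (j / g) := Nat.mul_le_mul_left g h4
          have hkj : k - j ≤ g := by omega
          have h1 : LCSlen (sub (fun p => S (p / g)) i j) (sub (fun p => S (p / g)) j k) ≤ g := by
            have := myLCS_le_right (sub (fun p => S (p / g)) i j) (sub (fun p => S (p / g)) j k)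
            rw [my_sub_length] at this
            omega
          have h2 : ((LCSlen (sub (fun p => S (p / g)) i j) (sub (fun p => S (p / g)) j k) : ℕ) : ℝ)
              ≤ (g:ℝ) := by exact_mod_cast h1
          linarith [mul_pos hε0 hkiR]
        · -- main case
          push_neg at hB
          have hBlt : j / g + 1 < (k - 1) / g + 1 := hB
          have hAlt : i / g < j / g := by
            rcases Nat.lt_or_ge (i / g) (j / g) with h | h
            · exact h
            · exfalso
              rcases Nat.lt_or_ge (j / g) (i / g) with h' | h'
              · have h3 := Nat.mul_le_mul_left g (show j / g + 1 ≤ i / g by omega)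
                rw [Nat.mul_add, Nat.mul_one] at h3
                omega
              · exact hA (le_antisymm h' h)
          have hij_blk : i < g * (j / g) := by
            have h3 := Nat.mul_le_mul_left g (show i / g + 1 ≤ j / g from hAlt)
            rw [Nat.mul_add, Nat.mul_one] at h3
            omega
          have hjk_blk : g * (j / g + 1) ≤ k - 1 := by
            have h4 := Nat.mul_le_mul_left g (show j / g + 1 ≤ (k - 1) / g by omega)
            have h5 : g * (j / g + 1) = g * (j / g) + g := by ring
            omega
          have hmul1 : g * (j / g + 1) = g * (j / g) + g := by ring
          -- uniform ε-bound from hS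
          have hhSbound : ∀ m : ℕ, i / g < m → m < (k - 1) / g + 1 →
              2 * ((LCSlen (sub S (i / g) m) (sub S m ((k - 1) / g + 1)) : ℕ) : ℝ)
                < ε * ((((k - 1) / g : ℕ) : ℝ) + 1 - ((i / g : ℕ) : ℝ)) := by
            intro m hm1 hm2
            have hhs := hS (i / g) m ((k - 1) / g + 1) hm1 hm2 hkBn
            have heq := myED_eq (sub S (i / g) m) (sub S m ((k - 1) / g + 1))
            rw [my_sub_length, my_sub_length] at heq
            have h5 : ED (sub S (i / g) m) (sub S m ((k - 1) / g + 1))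
                + 2 * LCSlen (sub S (i / g) m) (sub S m ((k - 1) / g + 1))
                = ((k - 1) / g + 1) - i / g := by omega
            have h6 := congrArg (fun t : ℕ => (t : ℝ)) h5
            push_cast [Nat.cast_sub (by omega : i / g ≤ (k - 1) / g + 1)] at h6
            push_cast at hhs
            linarith
          have hspan : (g:ℝ) * ((((k - 1) / g : ℕ) : ℝ) + 1 - ((i / g : ℕ) : ℝ))
              ≤ ((k:ℝ) - i) + 2 * (g:ℝ) - 2 := by
            have h6 : g * ((k - 1) / g + 1) ≤ k - 1 + g := by
              have : g * ((k - 1) / g + 1) = g * ((k - 1) / g) + g := by ring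
              omega
            have h7 : i + 1 ≤ g * (i / g) + g := by omega
            have h6R : (g:ℝ) * ((((k - 1) / g : ℕ) : ℝ) + 1) ≤ ((k:ℝ) - 1) + g := by
              have h8 := (Nat.cast_le (α := ℝ)).mpr h6
              push_cast [Nat.cast_sub (by omega : 1 ≤ k)] at h8
              linarith
            have h7R : (i:ℝ) + 1 ≤ (g:ℝ) * ((i / g : ℕ) : ℝ) + g := by exact_mod_cast h7
            nlinarith
          by_cases hC : 2 * (j % g) ≤ g
          · -- drop the x-side piece of the boundary block
            have hx : sub (fun p => S (p / g)) i j
                = sub (fun p => S (p / g)) i (g * (j / g)) ++ sub (fun p => S (p / g)) (g * (j / g)) j :=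
              my_sub_append _ i (g * (j / g)) j (le_of_lt hij_blk) (by omega)
            have h8 : LCSlen (sub (fun p => S (p / g)) i j) (sub (fun p => S (p / g)) j k)
                ≤ LCSlen (sub (fun p => S (p / g)) i (g * (j / g))) (sub (fun p => S (p / g)) j k)
                  + (j % g) := by
              rw [hx]
              have h9 := myLCS_append_le (sub (fun p => S (p / g)) i (g * (j / g)))
                (sub (fun p => S (p / g)) (g * (j / g)) j) (sub (fun p => S (p / g)) j k)
              rw [my_sub_length] at h9
              omega
            have h10 := my_blow S g hg0 i (g * (j / g)) j k (j / g)
              (le_of_lt hij_blk) (le_refl _) (by omega) (by omega)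
            have h11 : LCSlen (sub (fun p => S (p / g)) i j) (sub (fun p => S (p / g)) j k)
                ≤ g * LCSlen (sub S (i / g) (j / g)) (sub S (j / g) ((k - 1) / g + 1)) + (j % g) := by
              omega
            have hF1 := hhSbound (j / g) hAlt (by omega)
            have hF3 : ((LCSlen (sub (fun p => S (p / g)) i j) (sub (fun p => S (p / g)) j k) : ℕ) : ℝ)
                ≤ (g:ℝ) * ((LCSlen (sub S (i / g) (j / g)) (sub S (j / g) ((k - 1) / g + 1)) : ℕ) : ℝ)
                  + ((j % g : ℕ) : ℝ) := by exact_mod_cast h11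
            have hF4 : 2 * ((j % g : ℕ) : ℝ) ≤ (g:ℝ) := by exact_mod_cast hC
            have hG1 := mul_lt_mul_of_pos_left hF1 hgR
            have hG2 := mul_le_mul_of_nonneg_left hspan (le_of_lt hε0)
            have hG4 : ε * (2 * (g:ℝ) - 2) ≤ 2 * (g:ℝ) - 2 := by
              nlinarith [mul_nonneg (show (0:ℝ) ≤ 1 - ε by linarith)
                (show (0:ℝ) ≤ 2 * (g:ℝ) - 2 by linarith)]
            linarith [hG1, hG2, hG4, hF3, hF4, hbudget]
          · -- drop the y-side piece of the boundary block
            push_neg at hC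
            have hy : sub (fun p => S (p / g)) j k
                = sub (fun p => S (p / g)) j (g * (j / g + 1))
                  ++ sub (fun p => S (p / g)) (g * (j / g + 1)) k :=
              my_sub_append _ j (g * (j / g + 1)) k (by omega) (by omega)
            have h8 : LCSlen (sub (fun p => S (p / g)) i j) (sub (fun p => S (p / g)) j k)
                ≤ LCSlen (sub (fun p => S (p / g)) i j) (sub (fun p => S (p / g)) (g * (j / g + 1)) k)
                  + (g - j % g) := by
              rw [hy]
              have h9 := my_LCS_prepend_le (sub (fun p => S (p / g)) i j)
                (sub (fun p => S (p / g)) j (g * (j / g + 1)))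
                (sub (fun p => S (p / g)) (g * (j / g + 1)) k)
              rw [my_sub_length] at h9
              omega
            have h10 := my_blow S g hg0 i j (g * (j / g + 1)) k (j / g + 1)
              (by omega) (by omega) (le_refl _) (by omega)
            have h11 : LCSlen (sub (fun p => S (p / g)) i j) (sub (fun p => S (p / g)) j k)
                ≤ g * LCSlen (sub S (i / g) (j / g + 1)) (sub S (j / g + 1) ((k - 1) / g + 1))
                  + (g - j % g) := by omega
            have hF1 := hhSbound (j / g + 1) (by omega) (by omega)
            have hF3 : ((LCSlen (sub (fun p => S (p / g)) i j) (sub (fun p => S (p / g)) j k) : ℕ) : ℝ)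
                ≤ (g:ℝ) * ((LCSlen (sub S (i / g) (j / g + 1)) (sub S (j / g + 1) ((k - 1) / g + 1)) : ℕ) : ℝ)
                  + ((g - j % g : ℕ) : ℝ) := by exact_mod_cast h11
            have hF4 : 2 * ((g - j % g : ℕ) : ℝ) ≤ (g:ℝ) := by
              have : 2 * (g - j % g) ≤ g := by omega
              exact_mod_cast this
            have hG1 := mul_lt_mul_of_pos_left hF1 hgR
            have hG2 := mul_le_mul_of_nonneg_left hspan (le_of_lt hε0)
            have hG4 : ε * (2 * (g:ℝ) - 2) ≤ 2 * (g:ℝ) - 2 := by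
              nlinarith [mul_nonneg (show (0:ℝ) ≤ 1 - ε by linarith)
                (show (0:ℝ) ≤ 2 * (g:ℝ) - 2 by linarith)]
            linarith [hG1, hG2, hG4, hF3, hF4, hbudget]
    -- conclude from key
    have hp := hproj (fun p => S (p / g)) (fun v => v.2.2) (fun p => rfl)
    have heq := myED_eq (sub (fun p => S (p / g)) i j) (sub (fun p => S (p / g)) j k)
    rw [my_sub_length, my_sub_length] at heq
    have h5 : ED (sub (fun p => S (p / g)) i j) (sub (fun p => S (p / g)) j k)
        + 2 * LCSlen (sub (fun p => S (p / g)) i j) (sub (fun p => S (p / g)) j k) = k - i := by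
      omega
    have hcast : ((ED (sub (fun p => S (p / g)) i j) (sub (fun p => S (p / g)) j k) : ℕ) : ℝ)
        + 2 * ((LCSlen (sub (fun p => S (p / g)) i j) (sub (fun p => S (p / g)) j k) : ℕ) : ℝ)
        = (k:ℝ) - i := by
      have h6 := congrArg (fun t : ℕ => (t : ℝ)) h5
      push_cast [Nat.cast_sub (le_of_lt (lt_trans hij hjk))] at h6
      linarith
    linarith [hp, key, hcast]
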